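/- (Weighted hypervolume of dominated regions transforms to ordinary hypervolume under desirability maps, m = 2) Let k₁, k₂ : ℝ → ℝ be nonnegative integrable functions on [0,1] with T_j(t) = ∫₀ᵗ k_j(s) ds, and let A ⊂ [0,1]² be finite nonempty with reference point r = (1,1). Then ∫_{Dom_r(A)} k₁(y₁)k₂(y₂) dy = Vol(Dom_{T(r)}(T(A))), where T(y) = (T₁(y₁), T₂(y₂)) and Vol denotes two-dimensional Lebesgue measure. -/

import Mathlib

open MeasureTheory intervalIntegral

/-- Desirability transform with kernel `k` and lower limit `0`. -/
noncomputable def desir (k : ℝ → ℝ) (t : ℝ) : ℝ := ∫ s in (0 : ℝ)..t, k s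

/-- Dominated region of a finite set bounded by the reference point `(1,1)`. -/
def dom (A : Finset (ℝ × ℝ)) : Set (ℝ × ℝ) := ⋃ a ∈ A, Set.Icc a (1, 1)

section aux


private lemma indicator_biUnion_eq_sum {ι α : Type*} [DecidableEq ι] (s : Finset ι) (B : ι → Set α)
    (f : α → ℝ) (x : α) :
    (⋃ i ∈ s, B i).indicator f x =
      ∑ t ∈ s.powerset.filter (·.Nonempty),
        (-1 : ℝ) ^ (t.card + 1) * (⋂ i ∈ t, B i).indicator f x := by
  classical
  by_cases hx : x ∈ ⋃ i ∈ s, B i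
  · rw [Set.indicator_of_mem hx]
    set J := s.filter (fun i => x ∈ B i) with hJdef
    have hJs : J ⊆ s := Finset.filter_subset _ _
    have hJne : J.Nonempty := by
      simp only [Set.mem_iUnion] at hx
      obtain ⟨i, hi, hxi⟩ := hx
      exact ⟨i, Finset.mem_filter.2 ⟨hi, hxi⟩⟩
    have step1 : ∑ t ∈ s.powerset.filter (·.Nonempty),
        (-1 : ℝ) ^ (t.card + 1) * (⋂ i ∈ t, B i).indicator f x
        = ∑ t ∈ s.powerset.filter (·.Nonempty),
            (if t ⊆ J then (-1 : ℝ) ^ (t.card + 1) * f x else 0) := by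
      refine Finset.sum_congr rfl fun t htmem => ?_
      obtain ⟨hts, htne⟩ := Finset.mem_filter.1 htmem
      by_cases h : t ⊆ J
      · rw [if_pos h, Set.indicator_of_mem]
        exact Set.mem_iInter₂.2 fun i hi => (Finset.mem_filter.1 (h hi)).2
      · rw [if_neg h, Set.indicator_of_notMem, mul_zero]
        intro hxm
        exact h fun i hi => Finset.mem_filter.2
          ⟨Finset.mem_powerset.1 hts hi, Set.mem_iInter₂.1 hxm i hi⟩
    rw [step1, ← Finset.sum_filter]
    have hsetEq : (s.powerset.filter (·.Nonempty)).filter (· ⊆ J)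
        = J.powerset.filter (·.Nonempty) := by
      ext t
      simp only [Finset.mem_filter, Finset.mem_powerset]
      constructor
      · rintro ⟨⟨_, h2⟩, h3⟩; exact ⟨h3, h2⟩
      · rintro ⟨h1, h2⟩; exact ⟨⟨h1.trans hJs, h2⟩, h1⟩
    rw [hsetEq, ← Finset.sum_mul]
    have hz : (∑ t ∈ J.powerset, (-1 : ℝ) ^ t.card) = 0 := by
      exact_mod_cast Finset.sum_powerset_neg_one_pow_card_of_nonempty hJne
    have hsplit := Finset.sum_filter_add_sum_filter_not J.powerset (·.Nonempty)
      (fun t => (-1 : ℝ) ^ t.card)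
    have hne : J.powerset.filter (fun t => ¬ t.Nonempty) = {∅} := by
      ext t
      simp only [Finset.mem_filter, Finset.mem_powerset, Finset.not_nonempty_iff_eq_empty,
        Finset.mem_singleton, and_iff_right_iff_imp]
      rintro rfl; exact Finset.empty_subset _
    rw [hne, Finset.sum_singleton] at hsplit
    have h1 : (∑ t ∈ J.powerset.filter (·.Nonempty), (-1 : ℝ) ^ t.card) = -1 := by
      simp only [Finset.card_empty, pow_zero, hz] at hsplit; linarith
    have : (∑ t ∈ J.powerset.filter (·.Nonempty), (-1 : ℝ) ^ (t.card + 1)) = 1 := by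
      simp only [pow_succ, mul_neg_one, Finset.sum_neg_distrib, h1, neg_neg]
    rw [this, one_mul]
  · rw [Set.indicator_of_notMem hx]
    refine (Finset.sum_eq_zero fun t htm => ?_).symm
    obtain ⟨hts, htne⟩ := Finset.mem_filter.1 htm
    obtain ⟨i, hi⟩ := htne
    rw [Set.indicator_of_notMem, mul_zero]
    intro hxm
    exact hx (Set.mem_iUnion₂.2 ⟨i, Finset.mem_powerset.1 hts hi, Set.mem_iInter₂.1 hxm i hi⟩)

private lemma integral_indicator_biUnion_eq {ι α : Type*} [DecidableEq ι] [MeasurableSpace α]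
    (μ : Measure α) (s : Finset ι) (B : ι → Set α) (f : α → ℝ)
    (hint : ∀ t ∈ s.powerset.filter (·.Nonempty), Integrable ((⋂ i ∈ t, B i).indicator f) μ) :
    ∫ x, (⋃ i ∈ s, B i).indicator f x ∂μ =
      ∑ t ∈ s.powerset.filter (·.Nonempty),
        (-1 : ℝ) ^ (t.card + 1) * ∫ x, (⋂ i ∈ t, B i).indicator f x ∂μ := by
  simp only [indicator_biUnion_eq_sum s B f]
  rw [integral_finset_sum _ (fun t ht => (hint t ht).const_mul _)]
  exact Finset.sum_congr rfl fun t ht => integral_const_mul _ _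


/-- 1-D facts packaged: for a nonneg kernel integrable on `[0,1]`. -/
lemma desir_monotoneOn {k : ℝ → ℝ} (hk : ∀ t, 0 ≤ k t)
    (hint : IntegrableOn k (Set.Icc (0 : ℝ) 1)) :
    MonotoneOn (desir k) (Set.Icc (0 : ℝ) 1) := by
  have hI : IntervalIntegrable k volume 0 1 := by
    apply IntegrableOn.intervalIntegrable
    rwa [Set.uIcc_of_le zero_le_one]
  intro x hx y hy hxy
  have h2 : IntervalIntegrable k volume 0 x := hI.mono_set (by
    rw [Set.uIcc_of_le hx.1, Set.uIcc_of_le zero_le_one]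
    exact Set.Icc_subset_Icc le_rfl hx.2)
  have h3 : IntervalIntegrable k volume 0 y := hI.mono_set (by
    rw [Set.uIcc_of_le hy.1, Set.uIcc_of_le zero_le_one]
    exact Set.Icc_subset_Icc le_rfl hy.2)
  have hsub := intervalIntegral.integral_interval_sub_left h3 h2
  have hnn : 0 ≤ ∫ s in x..y, k s := intervalIntegral.integral_nonneg hxy fun u _ => hk u
  simp only [desir]
  linarith [hsub ▸ hnn]

lemma setIntegral_Icc_desir {k : ℝ → ℝ} (hint : IntegrableOn k (Set.Icc (0 : ℝ) 1))
    {p : ℝ} (hp : p ∈ Set.Icc (0 : ℝ) 1) :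
    ∫ s in Set.Icc p 1, k s = desir k 1 - desir k p := by
  have hI : IntervalIntegrable k volume 0 1 := by
    apply IntegrableOn.intervalIntegrable
    rwa [Set.uIcc_of_le zero_le_one]
  have h2 : IntervalIntegrable k volume 0 p := hI.mono_set (by
    rw [Set.uIcc_of_le hp.1, Set.uIcc_of_le zero_le_one]
    exact Set.Icc_subset_Icc le_rfl hp.2)
  have hsub := intervalIntegral.integral_interval_sub_left hI h2
  rw [intervalIntegral.integral_of_le hp.2] at hsub
  rw [MeasureTheory.integral_Icc_eq_integral_Ioc]
  simp only [desir]
  exact hsub.symm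

end aux

theorem weighted_HV_eq_ordinary_HV_in_desirability_coordinates
    (k₁ k₂ : ℝ → ℝ) (hk₁ : ∀ t, 0 ≤ k₁ t) (hk₂ : ∀ t, 0 ≤ k₂ t)
    (hint₁ : IntegrableOn k₁ (Set.Icc (0 : ℝ) 1))
    (hint₂ : IntegrableOn k₂ (Set.Icc (0 : ℝ) 1))
    (A : Finset (ℝ × ℝ)) (hA : A.Nonempty)
    (hAsub : (A : Set (ℝ × ℝ)) ⊆ Set.Icc ((0 : ℝ), (0 : ℝ)) (1, 1)) :
    ∫ y in dom A, k₁ y.1 * k₂ y.2 =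
      (volume (⋃ a ∈ A,
        Set.Icc (desir k₁ a.1, desir k₂ a.2) (desir k₁ 1, desir k₂ 1))).toReal := by
  classical
  set f : ℝ × ℝ → ℝ := fun y => k₁ y.1 * k₂ y.2 with hfdef
  have hmono₁ := desir_monotoneOn hk₁ hint₁
  have hmono₂ := desir_monotoneOn hk₂ hint₂
  have hd₁ : ∀ p ∈ Set.Icc (0:ℝ) 1, 0 ≤ desir k₁ 1 - desir k₁ p :=
    fun p hp => sub_nonneg.2 (hmono₁ hp ⟨zero_le_one, le_rfl⟩ hp.2)
  have hd₂ : ∀ p ∈ Set.Icc (0:ℝ) 1, 0 ≤ desir k₂ 1 - desir k₂ p :=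
    fun p hp => sub_nonneg.2 (hmono₂ hp ⟨zero_le_one, le_rfl⟩ hp.2)
  -- integrability of f on big box
  have hfQ : IntegrableOn f (Set.Icc ((0:ℝ),(0:ℝ)) (1,1)) := by
    rw [Set.Icc_prod_eq, IntegrableOn, Measure.volume_eq_prod, ← Measure.prod_restrict]
    exact hint₁.mul_prod hint₂
  -- per-element bounds
  have hbound : ∀ a ∈ A, (0:ℝ) ≤ a.1 ∧ a.1 ≤ 1 ∧ (0:ℝ) ≤ a.2 ∧ a.2 ≤ 1 := by
    intro a ha
    have := hAsub ha
    rw [Set.mem_Icc, Prod.le_def, Prod.le_def] at this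
    exact ⟨this.1.1, this.2.1, this.1.2, this.2.2⟩
  -- per-subset facts
  have hsup : ∀ t : Finset (ℝ × ℝ), t ⊆ A → ∀ htne : t.Nonempty,
      (t.sup' htne (fun a => a.1) ∈ Set.Icc (0:ℝ) 1) ∧
      (t.sup' htne (fun a => a.2) ∈ Set.Icc (0:ℝ) 1) := by
    intro t htA htne
    obtain ⟨a₀, ha₀⟩ := htne
    constructor
    · exact ⟨le_trans (hbound a₀ (htA ha₀)).1 (Finset.le_sup' _ ha₀),
        Finset.sup'_le _ _ fun a ha => (hbound a (htA ha)).2.1⟩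
    · exact ⟨le_trans (hbound a₀ (htA ha₀)).2.2.1 (Finset.le_sup' _ ha₀),
        Finset.sup'_le _ _ fun a ha => (hbound a (htA ha)).2.2.2⟩
  have hcapBox : ∀ t : Finset (ℝ × ℝ), t ⊆ A → ∀ htne : t.Nonempty,
      (⋂ a ∈ t, Set.Icc a ((1:ℝ),(1:ℝ)))
        = Set.Icc (t.sup' htne (fun a => a.1), t.sup' htne (fun a => a.2)) (1,1) := by
    intro t htA htne
    ext x
    simp only [Set.mem_iInter, Set.mem_Icc, Prod.le_def]
    constructor
    · intro h
      obtain ⟨a₀, ha₀⟩ := htne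
      exact ⟨⟨Finset.sup'_le _ _ fun a ha => (h a ha).1.1,
        Finset.sup'_le _ _ fun a ha => (h a ha).1.2⟩, (h a₀ ha₀).2⟩
    · rintro ⟨⟨h1, h2⟩, hx⟩ a ha
      exact ⟨⟨le_trans (Finset.le_sup' (fun a => a.1) ha) h1,
        le_trans (Finset.le_sup' (fun a => a.2) ha) h2⟩, hx⟩
  have hcapTBox : ∀ t : Finset (ℝ × ℝ), t ⊆ A → ∀ htne : t.Nonempty,
      (⋂ a ∈ t, Set.Icc ((desir k₁ a.1, desir k₂ a.2) : ℝ × ℝ) (desir k₁ 1, desir k₂ 1))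
        = Set.Icc (desir k₁ (t.sup' htne (fun a => a.1)),
            desir k₂ (t.sup' htne (fun a => a.2))) (desir k₁ 1, desir k₂ 1) := by
    intro t htA htne
    have hm₁ : ∀ a ∈ t, desir k₁ a.1 ≤ desir k₁ (t.sup' htne (fun a => a.1)) := fun a ha =>
      hmono₁ ⟨(hbound a (htA ha)).1, (hbound a (htA ha)).2.1⟩ (hsup t htA htne).1
        (Finset.le_sup' _ ha)
    have hm₂ : ∀ a ∈ t, desir k₂ a.2 ≤ desir k₂ (t.sup' htne (fun a => a.2)) := fun a ha =>
      hmono₂ ⟨(hbound a (htA ha)).2.2.1, (hbound a (htA ha)).2.2.2⟩ (hsup t htA htne).2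
        (Finset.le_sup' _ ha)
    ext x
    simp only [Set.mem_iInter, Set.mem_Icc, Prod.le_def]
    constructor
    · intro h
      obtain ⟨a₁, ha₁, he₁⟩ := Finset.exists_mem_eq_sup' htne (fun a => a.1)
      obtain ⟨a₂, ha₂, he₂⟩ := Finset.exists_mem_eq_sup' htne (fun a => a.2)
      obtain ⟨a₀, ha₀⟩ := htne
      refine ⟨⟨?_, ?_⟩, (h a₀ ha₀).2⟩
      · rw [he₁]; exact (h a₁ ha₁).1.1
      · rw [he₂]; exact (h a₂ ha₂).1.2
    · rintro ⟨⟨h1, h2⟩, hx⟩ a ha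
      exact ⟨⟨le_trans (hm₁ a ha) h1, le_trans (hm₂ a ha) h2⟩, hx⟩
  -- integrability of each LHS term
  have hintL : ∀ t ∈ A.powerset.filter (·.Nonempty),
      Integrable ((⋂ a ∈ t, Set.Icc a ((1:ℝ),(1:ℝ))).indicator f) volume := by
    intro t ht
    obtain ⟨hts, htne⟩ := Finset.mem_filter.1 ht
    have htA := Finset.mem_powerset.1 hts
    rw [hcapBox t htA htne, integrable_indicator_iff measurableSet_Icc]
    exact hfQ.mono_set (Set.Icc_subset_Icc
      ⟨(hsup t htA htne).1.1, (hsup t htA htne).2.1⟩ le_rfl)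
  -- integrability of each RHS term
  have hintR : ∀ t ∈ A.powerset.filter (·.Nonempty),
      Integrable ((⋂ a ∈ t, Set.Icc ((desir k₁ a.1, desir k₂ a.2) : ℝ × ℝ)
        (desir k₁ 1, desir k₂ 1)).indicator (fun _ => (1:ℝ))) volume := by
    intro t ht
    obtain ⟨hts, htne⟩ := Finset.mem_filter.1 ht
    have htA := Finset.mem_powerset.1 hts
    rw [hcapTBox t htA htne, integrable_indicator_iff measurableSet_Icc]
    exact integrableOn_const isCompact_Icc.measure_lt_top.ne
  -- convert both sides to indicator integrals
  have hmeasL : MeasurableSet (dom A) :=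
    A.measurableSet_biUnion fun a _ => measurableSet_Icc
  have hmeasR : MeasurableSet (⋃ a ∈ A,
      Set.Icc ((desir k₁ a.1, desir k₂ a.2) : ℝ × ℝ) (desir k₁ 1, desir k₂ 1)) :=
    A.measurableSet_biUnion fun a _ => measurableSet_Icc
  rw [← MeasureTheory.integral_indicator hmeasL]
  have hRHS : (volume (⋃ a ∈ A,
      Set.Icc ((desir k₁ a.1, desir k₂ a.2) : ℝ × ℝ) (desir k₁ 1, desir k₂ 1))).toReal
      = ∫ x : ℝ × ℝ, (⋃ a ∈ A,
          Set.Icc ((desir k₁ a.1, desir k₂ a.2) : ℝ × ℝ)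
            (desir k₁ 1, desir k₂ 1)).indicator (fun _ => (1:ℝ)) x := by
    rw [MeasureTheory.integral_indicator hmeasR, MeasureTheory.setIntegral_const,
      smul_eq_mul, mul_one]
    rfl
  rw [hRHS]
  show ∫ x, (⋃ a ∈ A, Set.Icc a ((1:ℝ),(1:ℝ))).indicator f x = _
  rw [integral_indicator_biUnion_eq volume A _ f hintL,
    integral_indicator_biUnion_eq volume A _ _ hintR]
  refine Finset.sum_congr rfl fun t ht => ?_
  obtain ⟨hts, htne⟩ := Finset.mem_filter.1 ht
  have htA := Finset.mem_powerset.1 hts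
  congr 1
  have hp1 := (hsup t htA htne).1
  have hp2 := (hsup t htA htne).2
  rw [hcapBox t htA htne, hcapTBox t htA htne,
    MeasureTheory.integral_indicator measurableSet_Icc,
    MeasureTheory.integral_indicator measurableSet_Icc,
    MeasureTheory.setIntegral_const, smul_eq_mul, mul_one]
  rw [show Set.Icc ((t.sup' htne (fun a => a.1), t.sup' htne (fun a => a.2)) : ℝ × ℝ) (1,1)
      = Set.Icc (t.sup' htne (fun a => a.1)) 1 ×ˢ Set.Icc (t.sup' htne (fun a => a.2)) 1
    from Set.Icc_prod_eq _ _]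
  rw [hfdef]
  rw [Measure.volume_eq_prod, MeasureTheory.setIntegral_prod_mul,
    setIntegral_Icc_desir hint₁ hp1, setIntegral_Icc_desir hint₂ hp2]
  rw [show Set.Icc ((desir k₁ (t.sup' htne (fun a => a.1)),
        desir k₂ (t.sup' htne (fun a => a.2))) : ℝ × ℝ) (desir k₁ 1, desir k₂ 1)
      = Set.Icc (desir k₁ (t.sup' htne (fun a => a.1))) (desir k₁ 1)
          ×ˢ Set.Icc (desir k₂ (t.sup' htne (fun a => a.2))) (desir k₂ 1)
    from Set.Icc_prod_eq _ _]
  rw [measureReal_def, Measure.prod_prod, Real.volume_Icc, Real.volume_Icc,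
    ENNReal.toReal_mul, ENNReal.toReal_ofReal (hd₁ _ hp1), ENNReal.toReal_ofReal (hd₂ _ hp2)]
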